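/- Let T be a sign-diagonal matrix, t : Fin n → ℝ, φ(x) = T.mulVec x + t, and fix j : Fin n with T j j = 1 and t j = (m : ℝ) for some integer m. Then for any x* : Fin n → ℝ, the image under φ of the down-branch subproblem P ∩ {x | x j ≤ ⌊x* j⌋} equals P̂ ∩ {x̂ | x̂ j ≤ ⌊(φ x*) j⌋}, and the image of the up-branch subproblem P ∩ {x | x j ≥ ⌈x* j⌉} equals P̂ ∩ {x̂ | x̂ j ≥ ⌈(φ x*) j⌉} (floors and ceilings taken in ℝ via Int.floor and Int.ceil). That is, when T j j = 1 the down/up branching constraints on x j correspond exactly to down/up branching constraints on x̂ j. -/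

import Mathlib

open Matrix

/-- For a sign-diagonal affine map `φ(x) = T x + t` with `T j j = 1` and
`t j` an integer, `φ` maps the down-branch subproblem `P ∩ {x | x j ≤ ⌊x* j⌋}` onto
`P̂ ∩ {x̂ | x̂ j ≤ ⌊(φ x*) j⌋}` and the up-branch `P ∩ {x | x j ≥ ⌈x* j⌉}` onto
`P̂ ∩ {x̂ | x̂ j ≥ ⌈(φ x*) j⌉}`. -/
theorem sign_diagonal_branching_correspondence_pos
    (n q : ℕ) (A : Matrix (Fin q) (Fin n) ℝ) (b : Fin q → ℝ)
    (T : Matrix (Fin n) (Fin n) ℝ)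
    (hdiag : ∀ i j, i ≠ j → T i j = 0)
    (hsign : ∀ i, T i i = 1 ∨ T i i = -1)
    (t : Fin n → ℝ)
    (φ : (Fin n → ℝ) → (Fin n → ℝ))
    (hφ : ∀ x, φ x = T.mulVec x + t)
    (P : Set (Fin n → ℝ))
    (hP : P = {x | ∀ i, A.mulVec x i ≤ b i})
    (Phat : Set (Fin n → ℝ))
    (hPhat : Phat = {xhat | ∀ i, (A * T).mulVec xhat i ≤ (b + (A * T).mulVec t) i})
    (j : Fin n) (hTj : T j j = 1) (m : ℤ) (htj : t j = (m : ℝ))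
    (xstar : Fin n → ℝ) :
    φ '' (P ∩ {x | x j ≤ (⌊xstar j⌋ : ℝ)}) = Phat ∩ {xhat | xhat j ≤ (⌊φ xstar j⌋ : ℝ)} ∧
    φ '' (P ∩ {x | (⌈xstar j⌉ : ℝ) ≤ x j}) = Phat ∩ {xhat | (⌈φ xstar j⌉ : ℝ) ≤ xhat j} := by
  have hTapp : ∀ (x : Fin n → ℝ) (k : Fin n), T.mulVec x k = T k k * x k := by
    intro x k
    unfold Matrix.mulVec dotProduct
    rw [Finset.sum_eq_single k]
    · intro i _ hi; show T k i * x i = 0; rw [hdiag k i (Ne.symm hi), zero_mul]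
    · intro h; exact absurd (Finset.mem_univ k) h
  have hTT : ∀ x : Fin n → ℝ, T.mulVec (T.mulVec x) = x := by
    intro x; funext k; rw [hTapp, hTapp]
    rcases hsign k with h | h <;> rw [h] <;> ring
  have hφj : ∀ x : Fin n → ℝ, φ x j = x j + (m : ℝ) := by
    intro x; rw [hφ]; simp [hTapp, hTj, htj]
  have hPiff : ∀ x : Fin n → ℝ, φ x ∈ Phat ↔ x ∈ P := by
    intro x
    rw [hφ, hPhat, hP]
    simp only [Set.mem_setOf_eq]
    have key : ∀ i, (A * T).mulVec (T.mulVec x + t) i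
        = A.mulVec x i + (A * T).mulVec t i := by
      intro i
      rw [← Matrix.mulVec_mulVec, Matrix.mulVec_add, hTT, Matrix.mulVec_add,
        ← Matrix.mulVec_mulVec]
      rfl
    constructor
    · intro h i
      have := h i
      rw [key i] at this
      simpa using this
    · intro h i
      rw [key i]
      simpa using add_le_add_right (h i) ((A * T).mulVec t i)
  have hsurj : ∀ y : Fin n → ℝ, φ (T.mulVec (y - t)) = y := by
    intro y; rw [hφ, hTT]; simp
  have hxj : ∀ y : Fin n → ℝ, (T.mulVec (y - t)) j = y j - (m : ℝ) := by
    intro y; rw [hTapp, hTj, one_mul]; simp [htj]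
  have hfloor : (⌊φ xstar j⌋ : ℝ) = (⌊xstar j⌋ : ℝ) + (m : ℝ) := by
    rw [hφj, Int.floor_add_intCast]; push_cast; ring
  have hceil : (⌈φ xstar j⌉ : ℝ) = (⌈xstar j⌉ : ℝ) + (m : ℝ) := by
    rw [hφj, Int.ceil_add_intCast]; push_cast; ring
  constructor
  · ext y
    constructor
    · rintro ⟨x, ⟨hxP, hxle⟩, rfl⟩
      refine ⟨(hPiff x).mpr hxP, ?_⟩
      rw [Set.mem_setOf_eq, hfloor, hφj]
      exact add_le_add_left (show x j ≤ (⌊xstar j⌋ : ℝ) from hxle) _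
    · rintro ⟨hyP, hyle⟩
      refine ⟨T.mulVec (y - t), ⟨?_, ?_⟩, hsurj y⟩
      · exact (hPiff _).mp (by rw [hsurj]; exact hyP)
      · rw [Set.mem_setOf_eq, hxj]
        rw [Set.mem_setOf_eq, hfloor] at hyle
        linarith
  · ext y
    constructor
    · rintro ⟨x, ⟨hxP, hxle⟩, rfl⟩
      refine ⟨(hPiff x).mpr hxP, ?_⟩
      rw [Set.mem_setOf_eq, hceil, hφj]
      exact add_le_add_left (show (⌈xstar j⌉ : ℝ) ≤ x j from hxle) _
    · rintro ⟨hyP, hyle⟩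
      refine ⟨T.mulVec (y - t), ⟨?_, ?_⟩, hsurj y⟩
      · exact (hPiff _).mp (by rw [hsurj]; exact hyP)
      · rw [Set.mem_setOf_eq, hxj]
        rw [Set.mem_setOf_eq, hceil] at hyle
        linarith
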